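/- Let G be a regular paratopological group with topology τ such that the associated topological group G* = (G, τ ∨ τ⁻¹) is ω-narrow and simply sm-factorizable. Then G is simply sm-factorizable and ω-narrow. -/

import Mathlib

open Topology TopologicalSpace Pointwise Function Set

def IsCozero {X : Type*} [TopologicalSpace X] (U : Set X) : Prop :=
  ∃ f : X → ℝ, Continuous f ∧ U = f ⁻¹' {x : ℝ | x ≠ 0}

/-- A topological group is simply sm-factorizable if every cozero set is saturated with
respect to some continuous surjective homomorphism onto a separable metrizable topological group. -/
def SimplySMFactorizable (G : Type*) [Group G] [TopologicalSpace G] : Prop :=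
  ∀ U : Set G, IsCozero U →
    ∃ (H : Type) (gH : Group H) (tH : TopologicalSpace H),
      letI := gH
      letI := tH
      IsTopologicalGroup H ∧ SeparableSpace H ∧ MetrizableSpace H ∧
        ∃ π : G →* H, Continuous π ∧ Surjective π ∧ ⇑π ⁻¹' (⇑π '' U) = U

/-- A paratopological group is simply sm-factorizable if every cozero set is saturated with
respect to some continuous surjective homomorphism onto a separable metrizable paratopological group. -/
def SimplySMFactorizablePara (G : Type*) [Group G] [TopologicalSpace G] : Prop :=
  ∀ U : Set G, IsCozero U →
    ∃ (H : Type) (gH : Group H) (tH : TopologicalSpace H),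
      letI := gH
      letI := tH
      ContinuousMul H ∧ SeparableSpace H ∧ MetrizableSpace H ∧
        ∃ π : G →* H, Continuous π ∧ Surjective π ∧ ⇑π ⁻¹' (⇑π '' U) = U

/-- The conjugate topology τ⁻¹ = {U⁻¹ : U ∈ τ}: the topology induced by the inversion map. -/
def conjTop (G : Type*) [Group G] (τ : TopologicalSpace G) : TopologicalSpace G :=
  TopologicalSpace.induced (fun x : G => x⁻¹) τ

/-- A (para)topological group is ω-narrow if each neighborhood of the identity translates
over a countable set to cover the group. -/
def OmegaNarrow (G : Type*) [Group G] [TopologicalSpace G] : Prop :=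
  ∀ U ∈ 𝓝 (1 : G), ∃ A : Set G, A.Countable ∧ A * U = Set.univ ∧ U * A = Set.univ

section Auxiliary
open Filter

namespace SM19


variable {G : Type*} [Group G] [TopologicalSpace G] [ContinuousMul G]

/-- A countable family of open neighborhoods of `1` together with a countable set `D`,
closed under the operations needed for the Guran-type quotient construction. -/
structure GoodFam (Γ : Set (Set G)) (D : Set G) : Prop where
  countG : Γ.Countable
  countD : D.Countable
  univ_mem : (univ : Set G) ∈ Γ
  isOpen : ∀ A ∈ Γ, IsOpen A
  one_mem : ∀ A ∈ Γ, (1:G) ∈ A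
  sqrt : ∀ A ∈ Γ, ∃ B ∈ Γ, B * B ⊆ A
  reg : ∀ A ∈ Γ, ∃ B ∈ Γ, closure B ⊆ A
  inter : ∀ A ∈ Γ, ∀ B ∈ Γ, A ∩ B ∈ Γ
  conj : ∀ A ∈ Γ, ∀ d ∈ D, ∃ B ∈ Γ, ∀ g ∈ B, d * g * d⁻¹ ∈ A
  dinv : ∀ d ∈ D, d⁻¹ ∈ D
  cover_left : ∀ B ∈ Γ, ∀ x : G, ∃ d ∈ D, ∃ s ∈ B ∩ B⁻¹, x = d * s
  cover_right : ∀ B ∈ Γ, ∀ x : G, ∃ s ∈ B ∩ B⁻¹, ∃ d ∈ D, x = s * d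
  sep : ∀ A ∈ Γ, ∀ d ∈ D, d ∉ closure (A * A * (A ∩ A⁻¹)) →
      ∃ C ∈ Γ, ∀ c ∈ C, d * c ∉ A * A * (A ∩ A⁻¹)

theorem exists_goodFam [RegularSpace G]
    (hNar : ∀ U : Set G, IsOpen U → 1 ∈ U → ∃ E : Set G, E.Countable ∧
       (∀ x : G, ∃ d ∈ E, ∃ s ∈ U ∩ U⁻¹, x = d * s) ∧
       (∀ x : G, ∃ s ∈ U ∩ U⁻¹, ∃ d ∈ E, x = s * d))
    (seed : ℕ → Set G) (hseed : ∀ k, IsOpen (seed k) ∧ (1:G) ∈ seed k) :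
    ∃ (Γ : Set (Set G)) (D : Set G), GoodFam Γ D ∧ ∀ k, seed k ∈ Γ := by
  classical
  -- the subtype of open neighborhoods of 1
  let N' := {A : Set G // IsOpen A ∧ (1:G) ∈ A}
  -- square root function
  have hsq : ∀ A : N', ∃ B : N', B.1 * B.1 ⊆ A.1 := by
    rintro ⟨A, hA, h1⟩
    obtain ⟨V, hV, h1V, hVV⟩ := exists_open_nhds_one_mul_subset (hA.mem_nhds h1)
    exact ⟨⟨V, hV, h1V⟩, hVV⟩
  choose fsq hfsq using hsq
  -- regularity shrinking
  have hrg : ∀ A : N', ∃ B : N', closure B.1 ⊆ A.1 := by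
    rintro ⟨A, hA, h1⟩
    obtain ⟨t, ht, htc, hts⟩ := exists_mem_nhds_isClosed_subset (hA.mem_nhds h1)
    exact ⟨⟨interior t, isOpen_interior, mem_interior_iff_mem_nhds.2 ht⟩,
      (closure_mono interior_subset).trans (htc.closure_subset.trans hts)⟩
  choose frg hfrg using hrg
  -- intersection
  let fint : N' → N' → N' := fun A B => ⟨A.1 ∩ B.1, A.2.1.inter B.2.1, ⟨A.2.2, B.2.2⟩⟩
  -- conjugation response
  let fconj : G → N' → N' := fun d A =>
    ⟨(fun g => d * g * d⁻¹) ⁻¹' A.1,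
      A.2.1.preimage (by fun_prop), by simpa using A.2.2⟩
  have hfconj : ∀ (d : G) (A : N'), ∀ g ∈ (fconj d A).1, d * g * d⁻¹ ∈ A.1 := by
    intro d A g hg; exact hg
  -- separation response
  let SP : N' → Set G := fun A => A.1 * A.1 * (A.1 ∩ A.1⁻¹)
  let fsep : G → N' → N' := fun d A =>
    if h : d ∈ closure (SP A) then ⟨univ, isOpen_univ, mem_univ _⟩
    else ⟨(fun c => d * c) ⁻¹' (closure (SP A))ᶜ,
      (isClosed_closure.isOpen_compl).preimage (by fun_prop), by simpa using h⟩
  have hfsep : ∀ (d : G) (A : N'), d ∉ closure (SP A) →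
      ∀ c ∈ (fsep d A).1, d * c ∉ SP A := by
    intro d A hd c hc
    rw [show fsep d A = _ from dif_neg hd] at hc
    exact fun h => hc (subset_closure h)
  -- covering sets
  have hcv : ∀ A : N', ∃ E : Set G, E.Countable ∧ (∀ d ∈ E, d⁻¹ ∈ E) ∧
      (∀ x : G, ∃ d ∈ E, ∃ s ∈ A.1 ∩ A.1⁻¹, x = d * s) ∧
      (∀ x : G, ∃ s ∈ A.1 ∩ A.1⁻¹, ∃ d ∈ E, x = s * d) := by
    rintro ⟨A, hA, h1⟩
    obtain ⟨E, hEc, hEl, hEr⟩ := hNar A hA h1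
    refine ⟨E ∪ E⁻¹, hEc.union (hEc.preimage inv_injective), ?_, ?_, ?_⟩
    · rintro d (hd | hd)
      · exact Or.inr (by simpa using hd)
      · exact Or.inl (by simpa using hd)
    · intro x
      obtain ⟨d, hd, s, hs, hx⟩ := hEl x
      exact ⟨d, Or.inl hd, s, hs, hx⟩
    · intro x
      obtain ⟨s, hs, d, hd, hx⟩ := hEr x
      exact ⟨s, hs, d, Or.inl hd, hx⟩
  choose fcov hcov1 hcov2 hcov3 hcov4 using hcv
  -- stages
  let step : Set N' × Set G → Set N' × Set G := fun p =>
    ⟨p.1 ∪ fsq '' p.1 ∪ frg '' p.1 ∪ image2 fint p.1 p.1 ∪ image2 fconj p.2 p.1 ∪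
      image2 fsep p.2 p.1,
     p.2 ∪ p.2⁻¹ ∪ ⋃ A ∈ p.1, fcov A⟩
  let St : ℕ → Set N' × Set G := fun n =>
    Nat.rec (⟨{⟨univ, isOpen_univ, mem_univ _⟩} ∪ range (fun k => ⟨seed k, hseed k⟩), {1}⟩) (fun _ p => step p) n
  have hSt0 : ∀ n, (St n).1 ⊆ (St (n+1)).1 ∧ (St n).2 ⊆ (St (n+1)).2 := by
    intro n
    constructor
    · intro a ha; exact Or.inl <| Or.inl <| Or.inl <| Or.inl <| Or.inl ha
    · intro a ha; exact Or.inl <| Or.inl ha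
  have hmonoG : ∀ {m n}, m ≤ n → (St m).1 ⊆ (St n).1 := by
    intro m n h
    induction h with
    | refl => exact subset_rfl
    | step h ih => exact ih.trans (hSt0 _).1
  have hmonoD : ∀ {m n}, m ≤ n → (St m).2 ⊆ (St n).2 := by
    intro m n h
    induction h with
    | refl => exact subset_rfl
    | step h ih => exact ih.trans (hSt0 _).2
  have hcnt : ∀ n, (St n).1.Countable ∧ (St n).2.Countable := by
    intro n
    induction n with
    | zero =>
      exact ⟨(countable_singleton _).union (countable_range _), countable_singleton _⟩
    | succ n ih =>
      obtain ⟨h1, h2⟩ := ih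
      constructor
      · exact ((((h1.union (h1.image _)).union (h1.image _)).union (h1.image2 h1 _)).union
          (h2.image2 h1 _)).union (h2.image2 h1 _)
      · exact (h2.union (h2.preimage inv_injective)).union
          (h1.biUnion (fun A _ => hcov1 A))
  -- the limits
  let Γω : Set N' := ⋃ n, (St n).1
  let D : Set G := ⋃ n, (St n).2
  have hΓmem : ∀ {a : N'}, a ∈ Γω → ∃ n, a ∈ (St n).1 := fun h => mem_iUnion.1 h
  have hDmem : ∀ {d : G}, d ∈ D → ∃ n, d ∈ (St n).2 := fun h => mem_iUnion.1 h
  have hΓin : ∀ (n) {a : N'}, a ∈ (St n).1 → a ∈ Γω := fun n _ h => mem_iUnion.2 ⟨n, h⟩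
  have hDin : ∀ (n) {d : G}, d ∈ (St n).2 → d ∈ D := fun n _ h => mem_iUnion.2 ⟨n, h⟩
  -- closure properties on the subtype level
  have hsqω : ∀ a ∈ Γω, fsq a ∈ Γω := by
    intro a ha; obtain ⟨n, hn⟩ := hΓmem ha
    exact hΓin (n+1) (show fsq a ∈ (St (n+1)).1 from
      Or.inl <| Or.inl <| Or.inl <| Or.inl <| Or.inr (mem_image_of_mem _ hn))
  have hrgω : ∀ a ∈ Γω, frg a ∈ Γω := by
    intro a ha; obtain ⟨n, hn⟩ := hΓmem ha
    exact hΓin (n+1) (show frg a ∈ (St (n+1)).1 from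
      Or.inl <| Or.inl <| Or.inl <| Or.inr (mem_image_of_mem _ hn))
  have hintω : ∀ a ∈ Γω, ∀ b ∈ Γω, fint a b ∈ Γω := by
    intro a ha b hb
    obtain ⟨n, hn⟩ := hΓmem ha; obtain ⟨m, hm⟩ := hΓmem hb
    refine hΓin (max n m + 1) (show fint a b ∈ (St (max n m + 1)).1 from ?_)
    exact Or.inl <| Or.inl <| Or.inr
      (mem_image2_of_mem (hmonoG (le_max_left n m) hn) (hmonoG (le_max_right n m) hm))
  have hconjω : ∀ d ∈ D, ∀ a ∈ Γω, fconj d a ∈ Γω := by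
    intro d hd a ha
    obtain ⟨n, hn⟩ := hΓmem ha; obtain ⟨m, hm⟩ := hDmem hd
    refine hΓin (max n m + 1) (show fconj d a ∈ (St (max n m + 1)).1 from ?_)
    exact Or.inl <| Or.inr
      (mem_image2_of_mem (hmonoD (le_max_right n m) hm) (hmonoG (le_max_left n m) hn))
  have hsepω : ∀ d ∈ D, ∀ a ∈ Γω, fsep d a ∈ Γω := by
    intro d hd a ha
    obtain ⟨n, hn⟩ := hΓmem ha; obtain ⟨m, hm⟩ := hDmem hd
    refine hΓin (max n m + 1) (show fsep d a ∈ (St (max n m + 1)).1 from ?_)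
    exact Or.inr
      (mem_image2_of_mem (hmonoD (le_max_right n m) hm) (hmonoG (le_max_left n m) hn))
  have hdinvω : ∀ d ∈ D, d⁻¹ ∈ D := by
    intro d hd; obtain ⟨n, hn⟩ := hDmem hd
    exact hDin (n+1) (show d⁻¹ ∈ (St (n+1)).2 from Or.inl <| Or.inr (by rw [Set.mem_inv, inv_inv]; exact hn))
  have hcovω : ∀ a ∈ Γω, fcov a ⊆ D := by
    intro a ha; obtain ⟨n, hn⟩ := hΓmem ha
    intro d hd
    exact hDin (n+1) (show d ∈ (St (n+1)).2 from Or.inr (mem_biUnion hn hd))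
  -- final family
  refine ⟨Subtype.val '' Γω, D, ?_, ?_⟩
  · constructor
    · exact ((countable_iUnion (fun n => (hcnt n).1)).image _)
    · exact countable_iUnion (fun n => (hcnt n).2)
    · exact ⟨⟨univ, isOpen_univ, mem_univ _⟩, hΓin 0 (Or.inl rfl), rfl⟩
    · rintro A ⟨a, ha, rfl⟩; exact a.2.1
    · rintro A ⟨a, ha, rfl⟩; exact a.2.2
    · rintro A ⟨a, ha, rfl⟩
      exact ⟨fsq a, mem_image_of_mem _ (hsqω a ha), hfsq a⟩
    · rintro A ⟨a, ha, rfl⟩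
      exact ⟨frg a, mem_image_of_mem _ (hrgω a ha), hfrg a⟩
    · rintro A ⟨a, ha, rfl⟩ B ⟨b, hb, rfl⟩
      exact ⟨fint a b, hintω a ha b hb, rfl⟩
    · rintro A ⟨a, ha, rfl⟩ d hd
      exact ⟨(fconj d a).1, mem_image_of_mem _ (hconjω d hd a ha), hfconj d a⟩
    · exact hdinvω
    · rintro B ⟨b, hb, rfl⟩ x
      obtain ⟨d, hd, s, hs, hx⟩ := hcov3 b x
      exact ⟨d, hcovω b hb hd, s, hs, hx⟩
    · rintro B ⟨b, hb, rfl⟩ x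
      obtain ⟨s, hs, d, hd, hx⟩ := hcov4 b x
      exact ⟨s, hs, d, hcovω b hb hd, hx⟩
    · rintro A ⟨a, ha, rfl⟩ d hd hcl
      exact ⟨(fsep d a).1, mem_image_of_mem _ (hsepω d hd a ha), hfsep d a hcl⟩
  · intro k
    exact ⟨⟨seed k, hseed k⟩, hΓin 0 (Or.inr ⟨k, rfl⟩), rfl⟩


theorem buildTopology [RegularSpace G]
    {Γ : Set (Set G)} {D : Set G} (hF : GoodFam Γ D)
    {H : Type*} [Group H] (q : G →* H) (hq : Surjective q)
    (hker : ∀ x : G, q x = 1 ↔ x ∈ ⋂ A ∈ Γ, A ∩ A⁻¹) :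
    ∃ σ : TopologicalSpace H, @ContinuousMul H σ _ ∧ @T0Space H σ ∧ @RegularSpace H σ ∧
      @SecondCountableTopology H σ ∧ @Continuous G H _ σ q := by
  classical
  set P : Set G := ⋂ A ∈ Γ, A ∩ A⁻¹ with hPdef
  have hPsub : ∀ A ∈ Γ, P ⊆ A ∩ A⁻¹ := fun A hA => biInter_subset_of_mem hA
  have hPsymm : ∀ p ∈ P, p⁻¹ ∈ P := by
    intro p hp
    refine mem_iInter₂.2 fun A hA => ?_
    obtain ⟨h1, h2⟩ := hPsub A hA hp
    exact ⟨by simpa using h2, by simpa using h1⟩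
  have hqeq : ∀ x y : G, q x = q y ↔ x⁻¹ * y ∈ P := by
    intro x y
    rw [← hker (x⁻¹ * y), map_mul, map_inv, inv_mul_eq_one]
  -- subset products with 1
  have hsub1 : ∀ {A B : Set G}, (1:G) ∈ B → A ⊆ A * B := by
    intro A B h1 a ha; exact ⟨a, ha, 1, h1, mul_one a⟩
  have hsubL : ∀ {A B : Set G}, B ∈ Γ → A ∈ Γ → B * B ⊆ A → B ⊆ A := by
    intro A B hB hA h
    exact (hsub1 (hF.one_mem B hB)).trans h
  -- toolkit
  have L1 : ∀ {b : G} {B : Set G}, b ∈ B → ∀ C : Set G,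
      (q b) • (q '' C) ⊆ q '' (B * C) := by
    rintro b B hb C z hz
    obtain ⟨w, ⟨c, hc, rfl⟩, rfl⟩ := hz
    exact ⟨b * c, mul_mem_mul hb hc, by simp [map_mul, smul_eq_mul]⟩
  have L2 : ∀ (x : H) {B C : Set G}, B ⊆ C → x • (q '' B) ⊆ x • (q '' C) := by
    intro x B C h
    exact smul_set_mono (image_mono h)
  -- the neighborhood filters
  have hNe : Nonempty Γ := ⟨⟨univ, hF.univ_mem⟩⟩
  set n : H → Filter H := fun x => ⨅ B : Γ, 𝓟 (x • (q '' (B : Set G))) with hndef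
  have hdir : ∀ x : H, Directed (· ≥ ·) (fun B : Γ => 𝓟 (x • (q '' (B : Set G)))) := by
    intro x B C
    refine ⟨⟨(B:Set G) ∩ C, hF.inter B B.2 C C.2⟩, ?_, ?_⟩
    · exact principal_mono.2 (L2 x inter_subset_left)
    · exact principal_mono.2 (L2 x inter_subset_right)
  have hmemn : ∀ (x : H) (s : Set H), s ∈ n x ↔ ∃ B ∈ Γ, x • (q '' B) ⊆ s := by
    intro x s
    rw [hndef]
    rw [mem_iInf_of_directed (hdir x)]
    constructor
    · rintro ⟨⟨B, hB⟩, h⟩; exact ⟨B, hB, h⟩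
    · rintro ⟨B, hB, h⟩; exact ⟨⟨B, hB⟩, h⟩
  have hbasic : ∀ (x : H) {B : Set G}, B ∈ Γ → x • (q '' B) ∈ n x := by
    intro x B hB; exact (hmemn x _).2 ⟨B, hB, subset_rfl⟩
  have hself : ∀ (x : H) {B : Set G}, B ∈ Γ → x ∈ x • (q '' B) := by
    intro x B hB
    exact ⟨q 1, mem_image_of_mem _ (hF.one_mem B hB), by simp⟩
  -- the topology
  set σ : TopologicalSpace H := TopologicalSpace.mkOfNhds n with hσdef
  letI := σ
  have hnhds : ∀ x : H, 𝓝 x = n x := by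
    intro x
    refine TopologicalSpace.nhds_mkOfNhds n x ?_ ?_
    · intro y s hs
      obtain ⟨B, hB, hsub⟩ := (hmemn y s).1 hs
      exact hsub (hself y hB)
    · intro y s hs
      obtain ⟨B, hB, hsub⟩ := (hmemn y s).1 hs
      obtain ⟨B', hB', hBB'⟩ := hF.sqrt B hB
      have : ∀ z ∈ y • (q '' B'), s ∈ n z := by
        rintro z hz
        obtain ⟨w, ⟨b', hb', rfl⟩, rfl⟩ := hz
        refine (hmemn _ s).2 ⟨B', hB', ?_⟩
        calc (y • q b') • (q '' B') = y • (q b' • (q '' B')) := (smul_smul y (q b') _).symm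
        _ ⊆ y • (q '' (B' * B')) := smul_set_mono (L1 hb' B')
        _ ⊆ y • (q '' B) := L2 y hBB'
        _ ⊆ s := hsub
      exact Filter.mem_of_superset (hbasic y hB') this
  -- continuity of q
  have hcont : @Continuous G H _ σ q := by
    rw [continuous_iff_continuousAt]
    intro g
    unfold ContinuousAt
    rw [hnhds]
    intro s hs
    rw [mem_map]
    obtain ⟨B, hB, hsub⟩ := (hmemn (q g) s).1 hs
    have hopen : IsOpen ((fun h : G => g⁻¹ * h) ⁻¹' B) :=
      (hF.isOpen B hB).preimage (by fun_prop)
    have hmem : g ∈ (fun h : G => g⁻¹ * h) ⁻¹' B := by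
      simp [hF.one_mem B hB]
    refine Filter.mem_of_superset (hopen.mem_nhds hmem) ?_
    intro t ht
    show q t ∈ s
    refine hsub ?_
    refine ⟨q (g⁻¹ * t), mem_image_of_mem _ ht, ?_⟩
    show q g • q (g⁻¹ * t) = q t
    rw [smul_eq_mul, map_mul, map_inv]
    group
  -- T0
  have hT0 : @T0Space H σ := by
    rw [t0Space_iff_inseparable]
    intro x y hin
    have hinq : 𝓝 x = 𝓝 y := hin
    obtain ⟨g, rfl⟩ := hq x
    obtain ⟨h, rfl⟩ := hq y
    rw [hqeq]
    refine mem_iInter₂.2 fun A hA => ?_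
    obtain ⟨B, hB, hBB⟩ := hF.sqrt A hA
    have h1 : q h ∈ (q g) • (q '' B) := by
      have hm := hbasic (q g) hB
      rw [← hnhds] at hm
      rw [hinq] at hm
      exact mem_of_mem_nhds hm
    have h2 : q g ∈ (q h) • (q '' B) := by
      have hm := hbasic (q h) hB
      rw [← hnhds] at hm
      rw [← hinq] at hm
      exact mem_of_mem_nhds hm
    constructor
    · obtain ⟨w, ⟨b, hb, rfl⟩, hw⟩ := h1
      have hw' : q (g * b) = q h := by rw [map_mul]; simpa using hw
      rw [hqeq] at hw'
      have hmem : (g*b)⁻¹ * h ∈ B := ((hPsub B hB) hw').1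
      have heq : g⁻¹ * h = b * ((g*b)⁻¹ * h) := by group
      rw [heq]
      exact hBB (mul_mem_mul hb hmem)
    · obtain ⟨w, ⟨b, hb, rfl⟩, hw⟩ := h2
      have hw' : q (h * b) = q g := by rw [map_mul]; simpa using hw
      rw [hqeq] at hw'
      have hmem : (h*b)⁻¹ * g ∈ B := ((hPsub B hB) hw').1
      have hgh : h⁻¹ * g = b * ((h*b)⁻¹ * g) := by group
      rw [Set.mem_inv]
      have heq : (g⁻¹ * h)⁻¹ = h⁻¹ * g := by group
      rw [heq, hgh]
      exact hBB (mul_mem_mul hb hmem)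
  -- Regularity
  have hreg : @RegularSpace H σ := by
    refine RegularSpace.of_exists_mem_nhds_isClosed_subset ?_
    intro x s hs
    rw [hnhds] at hs
    obtain ⟨A, hA, hsub⟩ := (hmemn x s).1 hs
    obtain ⟨Am, hAm, hAmcl⟩ := hF.reg A hA
    obtain ⟨A0, hA0, hA0sq⟩ := hF.sqrt Am hAm
    obtain ⟨A0', hA0', hA0'cl⟩ := hF.reg A0 hA0
    obtain ⟨A1', hA1', hA1'sq⟩ := hF.sqrt A0' hA0'
    obtain ⟨A1, hA1, hA1sq⟩ := hF.sqrt A1' hA1'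
    refine ⟨closure (x • (q '' A1)), ?_, isClosed_closure, ?_⟩
    · rw [hnhds]
      exact Filter.mem_of_superset (hbasic x hA1) subset_closure
    · refine subset_trans ?_ hsub
      intro y hy
      obtain ⟨g, rfl⟩ := hq x
      obtain ⟨h, rfl⟩ := hq y
      -- step 1: for every C in Γ the translated set meets
      have hstep : ∀ C ∈ Γ, ∃ c ∈ C, ∃ a ∈ A1, ∃ p ∈ P, h * c = g * a * p := by
        intro C hC
        have hmeet : ((q h • (q '' C)) ∩ (q g • (q '' A1))).Nonempty := by
          rw [mem_closure_iff_nhds] at hy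
          exact hy _ (by rw [hnhds]; exact hbasic (q h) hC)
        obtain ⟨z, hz1, hz2⟩ := hmeet
        obtain ⟨w1, ⟨c, hc, rfl⟩, hz1⟩ := hz1
        obtain ⟨w2, ⟨a, ha, rfl⟩, hz2⟩ := hz2
        have hz1' : q h * q c = z := by simpa using hz1
        have hz2' : q g * q a = z := by simpa using hz2
        have heq : q (h * c) = q (g * a) := by
          rw [map_mul, map_mul, hz1', hz2']
        rw [hqeq] at heq
        refine ⟨c, hc, a, ha, (g*a)⁻¹ * (h*c), ?_, by group⟩
        have := hPsymm _ heq
        simpa [mul_inv_rev] using this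
      -- step 2: cover h' := g⁻¹ * h
      obtain ⟨s₀, hs₀, d, hd, hcov⟩ := hF.cover_right A1 hA1 (g⁻¹ * h)
      -- step 3: d is in the closure of the triple product
      have hdcl : d ∈ closure (A1 * A1 * (A1 ∩ A1⁻¹)) := by
        by_contra hdncl
        obtain ⟨C, hC, hCsep⟩ := hF.sep A1 hA1 d hd hdncl
        obtain ⟨c, hc, a, ha, p, hp, heq⟩ := hstep C hC
        refine hCsep c hc ?_
        have hdc : d * c = (s₀⁻¹ * a) * p := by
          have h1 : d = s₀⁻¹ * (g⁻¹ * h) := by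
            rw [hcov]; group
          rw [h1]
          have : s₀⁻¹ * (g⁻¹ * h) * c = s₀⁻¹ * (g⁻¹ * (h * c)) := by group
          rw [this, heq]; group
        rw [hdc]
        refine mul_mem_mul (mul_mem_mul ?_ ha) (hPsub A1 hA1 hp)
        have h2 := hs₀.2
        rw [Set.mem_inv] at h2
        exact h2
      -- step 4: conclude
      have hA1sub' : A1 ⊆ A1' := hsubL hA1 hA1' hA1sq
      have hA1'sub : A1' ⊆ A0' := hsubL hA1' hA0' hA1'sq
      have hS : A1 * A1 * (A1 ∩ A1⁻¹) ⊆ A0' := by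
        refine subset_trans ?_ hA1'sq
        refine mul_subset_mul hA1sq ?_
        exact inter_subset_left.trans hA1sub'
      have hA1A0 : A1 ⊆ A0 := fun x hx => hA0'cl (subset_closure (hA1'sub (hA1sub' hx)))
      have hd0 : d ∈ A0 := hA0'cl (closure_mono hS hdcl)
      have hh' : g⁻¹ * h ∈ A := by
        have hmm : g⁻¹ * h ∈ A0 * A0 := by
          rw [hcov]
          exact mul_mem_mul (hA1A0 hs₀.1) hd0
        exact hAmcl (subset_closure (hA0sq hmm))
      refine ⟨q (g⁻¹ * h), mem_image_of_mem _ hh', ?_⟩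
      show q g • q (g⁻¹ * h) = q h
      rw [smul_eq_mul, map_mul, map_inv]
      group
  -- second countability
  have hsc : @SecondCountableTopology H σ := by
    have hbasis : IsTopologicalBasis
        (image2 (fun (d : G) (B : Set G) => interior ((q d) • (q '' B))) D Γ) := by
      refine isTopologicalBasis_of_isOpen_of_nhds ?_ ?_
      · rintro u ⟨d, hd, B, hB, rfl⟩
        exact isOpen_interior
      · intro x u hxu hu
        have hun : u ∈ 𝓝 x := hu.mem_nhds hxu
        rw [hnhds] at hun
        obtain ⟨A, hA, hsubA⟩ := (hmemn x u).1 hun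
        obtain ⟨B1, hB1, hB1sq⟩ := hF.sqrt A hA
        obtain ⟨B2, hB2, hB2sq⟩ := hF.sqrt B1 hB1
        obtain ⟨B3, hB3, hB3sq⟩ := hF.sqrt B2 hB2
        obtain ⟨g, rfl⟩ := hq x
        obtain ⟨d, hd, s₀, hs₀, hgds⟩ := hF.cover_left B3 hB3 g
        have hB3B2 : B3 ⊆ B2 := hsubL hB3 hB2 hB3sq
        have hB2B1 : B2 ⊆ B1 := hsubL hB2 hB1 hB2sq
        have hB1A : B1 ⊆ A := hsubL hB1 hA hB1sq
        refine ⟨interior ((q d) • (q '' B2)), ⟨d, hd, B2, hB2, rfl⟩, ?_, ?_⟩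
        · -- x is in the interior
          rw [mem_interior_iff_mem_nhds, hnhds]
          refine (hmemn _ _).2 ⟨B3, hB3, ?_⟩
          have hqg : q g = q d * q s₀ := by rw [← map_mul, ← hgds]
          calc q g • (q '' B3) = q d • (q s₀ • (q '' B3)) := by
                rw [smul_smul, ← hqg]
          _ ⊆ q d • (q '' (B3 * B3)) := smul_set_mono (L1 hs₀.1 B3)
          _ ⊆ q d • (q '' B2) := L2 _ hB3sq
        · -- the basis element is inside u
          refine subset_trans interior_subset (subset_trans ?_ hsubA)
          have hqd : q d = q g * q s₀⁻¹ := by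
            rw [← map_mul]
            congr 1
            rw [hgds]; group
          calc q d • (q '' B2) = q g • (q s₀⁻¹ • (q '' B2)) := by
                rw [smul_smul, ← hqd]
          _ ⊆ q g • (q '' (B3 * B2)) := by
                have hs₀inv : s₀⁻¹ ∈ B3 := by
                  have := hs₀.2; rwa [Set.mem_inv] at this
                exact smul_set_mono (L1 hs₀inv B2)
          _ ⊆ q g • (q '' A) :=
                L2 _ ((mul_subset_mul hB3B2 subset_rfl).trans (hB2sq.trans hB1A))
    refine hbasis.secondCountableTopology ?_
    exact Countable.image2 hF.countD hF.countG _
  -- conjugation lemma for arbitrary group elements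
  have hconjΓ : ∀ (h : G), ∀ A ∈ Γ, ∃ B ∈ Γ, ∀ b ∈ B, h⁻¹ * b * h ∈ A := by
    intro h A hA
    obtain ⟨A1, hA1, hA1sq⟩ := hF.sqrt A hA
    obtain ⟨A2, hA2, hA2sq⟩ := hF.sqrt A1 hA1
    have hA2A1 : A2 ⊆ A1 := hsubL hA2 hA1 hA2sq
    obtain ⟨d, hd, s₀, hs₀, hds⟩ := hF.cover_left A2 hA2 h
    obtain ⟨B, hB, hBconj⟩ := hF.conj A2 hA2 d⁻¹ (hF.dinv d hd)
    refine ⟨B, hB, ?_⟩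
    intro b hb
    have hmid : d⁻¹ * b * d ∈ A2 := by
      have := hBconj b hb
      simpa using this
    have hs₀inv : s₀⁻¹ ∈ A2 := by
      have := hs₀.2; rwa [Set.mem_inv] at this
    have hexp : h⁻¹ * b * h = (s₀⁻¹ * (d⁻¹ * b * d)) * s₀ := by
      rw [hds]; group
    rw [hexp]
    refine hA1sq (mul_mem_mul ?_ (hA2A1 hs₀.1))
    exact hA2sq (mul_mem_mul hs₀inv hmid)
  -- continuity of multiplication
  have hCM : @ContinuousMul H σ _ := by
    refine ⟨continuous_iff_continuousAt.2 ?_⟩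
    rintro ⟨x, y⟩
    unfold ContinuousAt
    rw [nhds_prod_eq, hnhds, hnhds, hnhds]
    intro s hs
    rw [mem_map]
    obtain ⟨A, hA, hsubA⟩ := (hmemn (x * y) s).1 hs
    obtain ⟨A1, hA1, hA1sq⟩ := hF.sqrt A hA
    obtain ⟨h, rfl⟩ := hq y
    obtain ⟨B, hB, hBconj⟩ := hconjΓ h A1 hA1
    rw [mem_prod_iff]
    refine ⟨x • (q '' B), hbasic x hB, (q h) • (q '' A1), hbasic _ hA1, ?_⟩
    rintro ⟨u, v⟩ ⟨hu, hv⟩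
    obtain ⟨w1, ⟨b, hb, rfl⟩, hu⟩ := hu
    obtain ⟨w2, ⟨a, ha, rfl⟩, hv⟩ := hv
    have hu' : u = x * q b := by simpa [eq_comm] using hu
    have hv' : v = q h * q a := by simpa [eq_comm] using hv
    show u * v ∈ s
    refine hsubA ?_
    refine ⟨q ((h⁻¹ * b * h) * a),
      mem_image_of_mem _ (hA1sq (mul_mem_mul (hBconj b hb) ha)), ?_⟩
    show (x * q h) • q ((h⁻¹ * b * h) * a) = u * v
    rw [smul_eq_mul, hu', hv']
    rw [map_mul, map_mul, map_mul, map_inv]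
    group
  exact ⟨σ, hCM, hT0, hreg, hsc, hcont⟩



theorem shrinkToType0 {H : Type*} [Group H] (σ : TopologicalSpace H)
    (hCM : @ContinuousMul H σ _) (hT0 : @T0Space H σ) (hreg : @RegularSpace H σ)
    (hsc : @SecondCountableTopology H σ) :
    ∃ (H₀ : Type) (g₀ : Group H₀) (σ₀ : TopologicalSpace H₀),
      @ContinuousMul H₀ σ₀ (Monoid.toMulOneClass.toMul) ∧ @SeparableSpace H₀ σ₀ ∧
      @MetrizableSpace H₀ σ₀ ∧
      ∃ e : H₀ ≃* H, @Continuous H H₀ σ σ₀ ⇑e.symm := by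
  classical
  letI := σ
  haveI := hCM; haveI := hT0; haveI := hreg; haveI := hsc
  haveI : T3Space H := ⟨⟩
  haveI : MetrizableSpace H := metrizableSpace_of_t3_secondCountable H
  -- injectivity into `Set ℕ`
  have hbc : (countableBasis H).Countable := countable_countableBasis H
  haveI := hbc.to_subtype
  obtain ⟨emb, hemb⟩ := exists_injective_nat ↥(countableBasis H)
  set f : H → Set ℕ := fun x => {m | ∃ s : ↥(countableBasis H), emb s = m ∧ x ∈ (s : Set H)}
    with hfdef
  have hfinj : Injective f := by
    intro x y hxy
    have hmemiff : ∀ s ∈ countableBasis H, x ∈ s ↔ y ∈ s := by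
      intro s hs
      constructor
      · intro hx
        have : emb ⟨s, hs⟩ ∈ f x := ⟨⟨s, hs⟩, rfl, hx⟩
        rw [hxy] at this
        obtain ⟨s', hs', hy⟩ := this
        have hseq : (s' : Set H) = s := congrArg Subtype.val (hemb hs')
        exact hseq ▸ hy
      · intro hy
        have : emb ⟨s, hs⟩ ∈ f y := ⟨⟨s, hs⟩, rfl, hy⟩
        rw [← hxy] at this
        obtain ⟨s', hs', hx⟩ := this
        have hseq : (s' : Set H) = s := congrArg Subtype.val (hemb hs')
        exact hseq ▸ hx
    have hins : Inseparable x y := by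
      rw [inseparable_iff_forall_isOpen]
      intro u hu
      constructor
      · intro hx
        obtain ⟨v, hv, hxv, hvu⟩ :=
          (isBasis_countableBasis H).exists_subset_of_mem_open hx hu
        exact hvu ((hmemiff v hv).1 hxv)
      · intro hy
        obtain ⟨v, hv, hyv, hvu⟩ :=
          (isBasis_countableBasis H).exists_subset_of_mem_open hy hu
        exact hvu ((hmemiff v hv).2 hyv)
    exact hins.eq
  haveI : Small.{0} H := small_of_injective hfinj
  refine ⟨Shrink.{0} H, inferInstance, induced (⇑(Shrink.mulEquiv (α := H))) σ, ?_, ?_, ?_, ?_⟩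
  · letI := induced (⇑(Shrink.mulEquiv (α := H))) σ
    exact IsInducing.continuousMul (Shrink.mulEquiv (α := H)) ⟨rfl⟩
  · letI := induced (⇑(Shrink.mulEquiv (α := H))) σ
    haveI : SecondCountableTopology (Shrink.{0} H) :=
      (IsInducing.secondCountableTopology (f := ⇑(Shrink.mulEquiv (α := H))) ⟨rfl⟩)
    exact SecondCountableTopology.to_separableSpace
  · letI := induced (⇑(Shrink.mulEquiv (α := H))) σ
    have hemb : IsEmbedding (⇑(Shrink.mulEquiv (α := H))) :=
      ⟨⟨rfl⟩, (Shrink.mulEquiv (α := H)).injective⟩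
    exact hemb.metrizableSpace
  · refine ⟨Shrink.mulEquiv (α := H), ?_⟩
    letI := induced (⇑(Shrink.mulEquiv (α := H))) σ
    refine continuous_induced_rng.2 ?_
    have hco : (⇑(Shrink.mulEquiv (α := H)) ∘ ⇑(Shrink.mulEquiv (α := H)).symm) = id := by
      funext x; simp
    rw [hco]
    exact continuous_id

end SM19

end Auxiliary

/-- If the topological group associated to a regular paratopological group G is ω-narrow and
simply sm-factorizable, then G itself is simply sm-factorizable and ω-narrow. -/
theorem statement19 (G : Type*) [gG : Group G] [τ : TopologicalSpace G] [ContinuousMul G]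
    [T1Space G] [RegularSpace G]
    (hNar : @OmegaNarrow G gG (τ ⊓ conjTop G τ))
    (hS : @SimplySMFactorizable G gG (τ ⊓ conjTop G τ)) :
    SimplySMFactorizablePara G ∧ OmegaNarrow G := by
  classical
  have hNarG : OmegaNarrow G := by
    intro U hU
    exact hNar U (Filter.le_def.1 (_root_.nhds_mono inf_le_left) U hU)
  refine ⟨?_, hNarG⟩
  -- the covering hypothesis for the closing-off construction
  have hcov : ∀ U : Set G, IsOpen U → (1:G) ∈ U → ∃ E : Set G, E.Countable ∧
      (∀ x : G, ∃ d ∈ E, ∃ s ∈ U ∩ U⁻¹, x = d * s) ∧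
      (∀ x : G, ∃ s ∈ U ∩ U⁻¹, ∃ d ∈ E, x = s * d) := by
    intro U hUo hU1
    have hmem : U ∩ U⁻¹ ∈ @nhds G (τ ⊓ conjTop G τ) 1 := by
      rw [_root_.nhds_inf]
      refine Filter.inter_mem_inf (hUo.mem_nhds hU1) ?_
      show U⁻¹ ∈ @nhds G (conjTop G τ) 1
      rw [show conjTop G τ = TopologicalSpace.induced (fun x : G => x⁻¹) τ from rfl]
      rw [nhds_induced]
      simp only [inv_one]
      exact Filter.preimage_mem_comap (hUo.mem_nhds hU1)
    obtain ⟨E, hEc, hEl, hEr⟩ := hNar _ hmem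
    refine ⟨E, hEc, ?_, ?_⟩
    · intro x
      have : x ∈ E * (U ∩ U⁻¹) := hEl ▸ mem_univ x
      obtain ⟨d, hd, s, hs, hx⟩ := Set.mem_mul.1 this
      exact ⟨d, hd, s, hs, hx.symm⟩
    · intro x
      have : x ∈ (U ∩ U⁻¹) * E := hEr ▸ mem_univ x
      obtain ⟨s, hs, d, hd, hx⟩ := Set.mem_mul.1 this
      exact ⟨s, hs, d, hd, hx.symm⟩
  intro U hUcoz
  obtain ⟨f, hfc, hfU⟩ := hUcoz
  have hfcstar : @Continuous G ℝ (τ ⊓ conjTop G τ) _ f := continuous_le_dom inf_le_left hfc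
  obtain ⟨K, gK, tK, hTG, hsepK, hmetK, φ, hφc, hφs, hφsat⟩ := hS U ⟨f, hfcstar, hfU⟩
  letI := gK
  letI := tK
  haveI := hmetK
  -- countable neighborhood basis at 1 in K
  obtain ⟨bb, hbb⟩ := (𝓝 (1 : K)).exists_antitone_basis
  -- seeds
  have hseedex : ∀ k : ℕ, ∃ VW : Set G × Set G,
      (IsOpen VW.1 ∧ (1:G) ∈ VW.1) ∧ (IsOpen VW.2 ∧ (1:G) ∈ VW.2) ∧
      ∀ x : G, x ∈ VW.1 → x⁻¹ ∈ VW.2 → φ x ∈ bb k := by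
    intro k
    have hpre : ⇑φ ⁻¹' (bb k) ∈ @nhds G (τ ⊓ conjTop G τ) 1 := by
      have ht : Filter.Tendsto ⇑φ (@nhds G (τ ⊓ conjTop G τ) 1) (𝓝 (1:K)) := by
        have h := @Continuous.tendsto G K (τ ⊓ conjTop G τ) tK ⇑φ hφc 1
        rwa [map_one] at h
      exact ht (hbb.toHasBasis.mem_of_mem trivial)
    rw [_root_.nhds_inf, Filter.mem_inf_iff] at hpre
    obtain ⟨t₁, ht₁, t₂, ht₂, heq⟩ := hpre
    rw [show conjTop G τ = TopologicalSpace.induced (fun x : G => x⁻¹) τ from rfl] at ht₂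
    rw [nhds_induced] at ht₂
    simp only [inv_one] at ht₂
    rw [Filter.mem_comap] at ht₂
    obtain ⟨t₂', ht₂', hsub2⟩ := ht₂
    refine ⟨(interior t₁, interior t₂'),
      ⟨isOpen_interior, mem_interior_iff_mem_nhds.2 ht₁⟩,
      ⟨isOpen_interior, mem_interior_iff_mem_nhds.2 ht₂'⟩, ?_⟩
    intro x hx1 hx2
    have hxt : x ∈ t₁ ∩ t₂ :=
      ⟨interior_subset hx1, hsub2 (show x⁻¹ ∈ t₂' from interior_subset hx2)⟩
    rw [← heq] at hxt
    exact hxt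
  choose VW hVW1 hVW2 hVW3 using hseedex
  set seed : ℕ → Set G := fun n => if n % 2 = 0 then (VW (n/2)).1 else (VW (n/2)).2
    with hseeddef
  have hseedprop : ∀ n, IsOpen (seed n) ∧ (1:G) ∈ seed n := by
    intro n
    rw [hseeddef]
    by_cases h : n % 2 = 0
    · simp only [h, if_true]
      exact hVW1 (n/2)
    · simp only [h, if_false]
      exact hVW2 (n/2)
  obtain ⟨Γ, D, hGF, hseedmem⟩ := SM19.exists_goodFam hcov seed hseedprop
  have hseedV : ∀ k, (VW k).1 ∈ Γ := by
    intro k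
    have h0 : (2*k) % 2 = 0 := by omega
    have h1 : 2*k/2 = k := by omega
    have := hseedmem (2*k)
    simpa only [hseeddef, h0, if_true, h1] using this
  have hseedW : ∀ k, (VW k).2 ∈ Γ := by
    intro k
    have h0 : ¬((2*k+1) % 2 = 0) := by omega
    have h1 : (2*k+1)/2 = k := by omega
    have := hseedmem (2*k+1)
    simpa only [hseeddef, if_neg h0, h1] using this
  -- the subgroup P
  set P : Set G := ⋂ A ∈ Γ, A ∩ A⁻¹ with hPdef
  have hPsub : ∀ A ∈ Γ, P ⊆ A ∩ A⁻¹ := fun A hA => biInter_subset_of_mem hA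
  have hsubB : ∀ {A B : Set G}, B ∈ Γ → B * B ⊆ A → B ⊆ A := by
    intro A B hB h x hx
    exact h ⟨x, hx, 1, hGF.one_mem B hB, mul_one x⟩
  have hP1 : (1:G) ∈ P := by
    refine mem_iInter₂.2 fun A hA => ⟨hGF.one_mem A hA, ?_⟩
    rw [Set.mem_inv, inv_one]; exact hGF.one_mem A hA
  have hPinv : ∀ x ∈ P, x⁻¹ ∈ P := by
    intro x hx
    refine mem_iInter₂.2 fun A hA => ?_
    obtain ⟨h1, h2⟩ := hPsub A hA hx
    exact ⟨Set.mem_inv.1 h2, by rwa [Set.mem_inv, inv_inv]⟩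
  have hPmul : ∀ x ∈ P, ∀ y ∈ P, x * y ∈ P := by
    intro x hx y hy
    refine mem_iInter₂.2 fun A hA => ?_
    obtain ⟨B, hB, hBB⟩ := hGF.sqrt A hA
    have hxB := hPsub B hB hx
    have hyB := hPsub B hB hy
    constructor
    · exact hBB (mul_mem_mul hxB.1 hyB.1)
    · rw [Set.mem_inv, mul_inv_rev]
      exact hBB (mul_mem_mul (Set.mem_inv.1 hyB.2) (Set.mem_inv.1 hxB.2))
  have hPconjA : ∀ g : G, ∀ p ∈ P, ∀ A ∈ Γ, g * p * g⁻¹ ∈ A := by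
    intro g p hp A hA
    obtain ⟨B1, hB1, hB1sq⟩ := hGF.sqrt A hA
    obtain ⟨B2, hB2, hB2sq⟩ := hGF.sqrt B1 hB1
    have hB2B1 : B2 ⊆ B1 := hsubB hB2 hB2sq
    obtain ⟨s₀, hs₀, d, hd, hgsd⟩ := hGF.cover_right B2 hB2 g
    obtain ⟨B6, hB6, hB6conj⟩ := hGF.conj B2 hB2 d hd
    have hpd : d * p * d⁻¹ ∈ B2 := hB6conj p (hPsub B6 hB6 hp).1
    have hexp : g * p * g⁻¹ = (s₀ * (d * p * d⁻¹)) * s₀⁻¹ := by rw [hgsd]; group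
    rw [hexp]
    refine hB1sq (mul_mem_mul (hB2sq (mul_mem_mul hs₀.1 hpd)) ?_)
    exact hB2B1 (Set.mem_inv.1 hs₀.2)
  have hPnorm : ∀ p ∈ P, ∀ g : G, g * p * g⁻¹ ∈ P := by
    intro p hp g
    refine mem_iInter₂.2 fun A hA => ⟨hPconjA g p hp A hA, ?_⟩
    rw [Set.mem_inv]
    have : (g * p * g⁻¹)⁻¹ = g * p⁻¹ * g⁻¹ := by group
    rw [this]
    exact hPconjA g p⁻¹ (hPinv p hp) A hA
  let N : Subgroup G :=
    { carrier := P
      one_mem' := hP1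
      mul_mem' := fun hx hy => hPmul _ hx _ hy
      inv_mem' := fun hx => hPinv _ hx }
  haveI hNnorm : N.Normal := ⟨fun p hp g => hPnorm p hp g⟩
  let q : G →* G ⧸ N := QuotientGroup.mk' N
  have hq : Surjective ⇑q := QuotientGroup.mk'_surjective N
  have hker : ∀ x : G, q x = 1 ↔ x ∈ ⋂ A ∈ Γ, A ∩ A⁻¹ := fun x =>
    QuotientGroup.eq_one_iff x
  obtain ⟨σ, hCM, hT0, hreg, hsc, hqc⟩ := SM19.buildTopology hGF q hq hker
  obtain ⟨H₀, g₀, σ₀, hCM₀, hsep₀, hmet₀, e, hec⟩ :=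
    SM19.shrinkToType0 σ hCM hT0 hreg hsc
  refine ⟨H₀, g₀, σ₀, hCM₀, hsep₀, hmet₀, ?_⟩
  letI := g₀
  refine ⟨(e.symm.toMonoidHom.comp q), ?_, ?_, ?_⟩
  · show @Continuous G H₀ τ σ₀ _
    have : ⇑(e.symm.toMonoidHom.comp q) = ⇑e.symm ∘ ⇑q := rfl
    rw [this]
    exact @Continuous.comp G (G ⧸ N) H₀ τ σ σ₀ _ _ hec hqc
  · exact (EquivLike.surjective e.symm).comp hq
  · -- saturation
    apply Subset.antisymm
    · intro x hx
      obtain ⟨u, hu, hpe⟩ := hx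
      have hqq : q u = q x := (EquivLike.injective e.symm) hpe
      have hmemP : u⁻¹ * x ∈ P := by
        rw [← hker]
        rw [map_mul, map_inv, hqq, inv_mul_cancel]
      -- φ is trivial on P
      have hφP : ∀ p ∈ P, φ p = 1 := by
        intro p hp
        have hPVW : ∀ k, φ p ∈ bb k := by
          intro k
          have h1 := hPsub _ (hseedV k) hp
          have h2 := hPsub _ (hseedW k) hp
          exact hVW3 k p h1.1 (Set.mem_inv.1 h2.2)
        by_contra hne
        have hT1 : T1Space K := inferInstance
        have hc : ({φ p}ᶜ : Set K) ∈ 𝓝 (1:K) :=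
          compl_singleton_mem_nhds (Ne.symm hne)
        obtain ⟨k, -, hsubk⟩ := hbb.toHasBasis.mem_iff.1 hc
        exact (hsubk (hPVW k)) rfl
      have hφeq : φ x = φ u := by
        have h1 : φ (u⁻¹ * x) = 1 := hφP _ hmemP
        have h2 : x = u * (u⁻¹ * x) := by group
        rw [h2, map_mul, h1, mul_one]
      have : φ x ∈ ⇑φ '' U := ⟨u, hu, hφeq.symm⟩
      have hxin : x ∈ ⇑φ ⁻¹' (⇑φ '' U) := this
      rwa [hφsat] at hxin
    · exact subset_preimage_image _ _
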